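/- Let (X,d) be a T₁ quasi-metric space whose forward topology is normal, and suppose (X,d) is a UC space. Then every closed subset A of X, with the restricted quasi-metric, is itself a UC space. -/
import Mathlib

open Filter Topology Set

structure IsQuasiMetric {X : Type*} (d : X → X → ℝ) : Prop where
  nonneg : ∀ x y, 0 ≤ d x y
  refl : ∀ x, d x x = 0
  eq_of_both_zero : ∀ x y, d x y = 0 → d y x = 0 → x = y
  triangle : ∀ x y z, d x y ≤ d x z + d z y

/-- The forward topology generated by forward balls `B⁺(x,ε) = {y | d x y < ε}`. -/
def forwardTopology {X : Type*} (d : X → X → ℝ) : TopologicalSpace X :=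
  TopologicalSpace.generateFrom {S | ∃ x : X, ∃ ε : ℝ, 0 < ε ∧ S = {y | d x y < ε}}

/-- `s` forward converges to `x`: `d x (s n) → 0`. -/
def ForwardConv {X : Type*} (d : X → X → ℝ) (s : ℕ → X) (x : X) : Prop :=
  ∀ ε > (0:ℝ), ∃ N : ℕ, ∀ n ≥ N, d x (s n) < ε

/-- `s` backward converges to `x`: `d (s n) x → 0`. -/
def BackwardConv {X : Type*} (d : X → X → ℝ) (s : ℕ → X) (x : X) : Prop :=
  ∀ ε > (0:ℝ), ∃ N : ℕ, ∀ n ≥ N, d (s n) x < ε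

/-- `x` is a cluster point of `s`: some subsequence forward converges to `x`. -/
def IsClusterPointOf {X : Type*} (d : X → X → ℝ) (s : ℕ → X) (x : X) : Prop :=
  ∃ φ : ℕ → ℕ, StrictMono φ ∧ ForwardConv d (s ∘ φ) x

def LeftKCauchy {X : Type*} (d : X → X → ℝ) (s : ℕ → X) : Prop :=
  ∀ ε > (0:ℝ), ∃ n₀ : ℕ, ∀ k n : ℕ, n₀ ≤ k → k ≤ n → d (s k) (s n) < ε

/-- `s` is forward parallel to `t`. -/
def ForwardParallel {X : Type*} (d : X → X → ℝ) (s t : ℕ → X) : Prop :=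
  ∀ ε > (0:ℝ), ∃ N : ℕ, ∀ n ≥ N, d (s n) (t n) < ε

/-- Forward continuity for real-valued functions (ε-δ form). -/
def ForwardContinuous {X : Type*} (d : X → X → ℝ) (f : X → ℝ) : Prop :=
  ∀ x₀ : X, ∀ ε > (0:ℝ), ∃ δ > (0:ℝ), ∀ y, d x₀ y < δ → |f x₀ - f y| < ε

/-- Uniform continuity for real-valued functions. -/
def UniformlyCont {X : Type*} (d : X → X → ℝ) (f : X → ℝ) : Prop :=
  ∀ ε > (0:ℝ), ∃ δ > (0:ℝ), ∀ x y, d x y < δ → |f x - f y| < ε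

/-- `(X,d)` is a UC quasi-metric space. -/
def IsUC {X : Type*} (d : X → X → ℝ) : Prop :=
  ∀ f : X → ℝ, ForwardContinuous d f → UniformlyCont d f

/-- Distance between two sets: `inf {d a b | a ∈ A, b ∈ B}`. -/
noncomputable def setDist {X : Type*} (d : X → X → ℝ) (A B : Set X) : ℝ :=
  sInf {r : ℝ | ∃ a ∈ A, ∃ b ∈ B, d a b = r}

section Aux

variable {X : Type*} (d : X → X → ℝ)

/-- Characterization of open sets in the forward topology. -/
lemma isOpen_forward_iff (hd : IsQuasiMetric d) (U : Set X) :
    IsOpen[forwardTopology d] U ↔ ∀ x ∈ U, ∃ ε > (0:ℝ), {y | d x y < ε} ⊆ U := by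
  constructor
  · intro hU
    induction hU with
    | basic S hS =>
        obtain ⟨z, ε, hε, rfl⟩ := hS
        intro x hx
        refine ⟨ε - d z x, by simpa using hx, ?_⟩
        intro y hy
        have h1 := hd.triangle z y x
        simp only [mem_setOf_eq] at hy ⊢
        linarith
    | univ => exact fun x _ => ⟨1, one_pos, fun y _ => mem_univ y⟩
    | inter U V _ _ ihU ihV =>
        intro x hx
        obtain ⟨ε1, hε1, h1⟩ := ihU x hx.1
        obtain ⟨ε2, hε2, h2⟩ := ihV x hx.2
        refine ⟨min ε1 ε2, lt_min hε1 hε2, fun y hy => ?_⟩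
        simp only [mem_setOf_eq] at hy
        exact ⟨h1 (lt_of_lt_of_le hy (min_le_left _ _)),
          h2 (lt_of_lt_of_le hy (min_le_right _ _))⟩
    | sUnion S _ ih =>
        intro x hx
        obtain ⟨T, hT, hxT⟩ := hx
        obtain ⟨ε, hε, h⟩ := ih T hT x hxT
        exact ⟨ε, hε, fun y hy => ⟨T, hT, h hy⟩⟩
  · intro h
    have : U = ⋃ x ∈ U, {y | d x y < Classical.choose (h x ‹_›)} := by
      ext y
      simp only [mem_iUnion, mem_setOf_eq]
      constructor
      · intro hy
        exact ⟨y, hy, by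
          have := (Classical.choose_spec (h y hy)).1
          simpa [hd.refl y] using this⟩
      · rintro ⟨x, hx, hy⟩
        exact (Classical.choose_spec (h x hx)).2 hy
    rw [this]
    letI : TopologicalSpace X := forwardTopology d
    refine isOpen_iUnion fun x => isOpen_iUnion fun hx => ?_
    exact TopologicalSpace.GenerateOpen.basic _
      ⟨x, _, (Classical.choose_spec (h x hx)).1, rfl⟩

lemma forwardContinuous_iff_continuous (hd : IsQuasiMetric d) (f : X → ℝ) :
    ForwardContinuous d f ↔ Continuous[forwardTopology d, _] f := by
  constructor
  · intro hf
    rw [continuous_def]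
    intro U hU
    rw [isOpen_forward_iff d hd]
    intro x hx
    obtain ⟨ε, hε, hball⟩ := Metric.isOpen_iff.1 hU (f x) hx
    obtain ⟨δ, hδ, h⟩ := hf x ε hε
    refine ⟨δ, hδ, fun y hy => hball ?_⟩
    rw [Metric.mem_ball, Real.dist_eq, abs_sub_comm]
    exact h y hy
  · intro hf x ε hε
    have hopen : IsOpen[forwardTopology d] (f ⁻¹' Metric.ball (f x) ε) :=
      (continuous_def.1 hf) _ Metric.isOpen_ball
    rw [isOpen_forward_iff d hd] at hopen
    obtain ⟨δ, hδ, h⟩ := hopen x (by simp [Metric.mem_ball, hε])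
    refine ⟨δ, hδ, fun y hy => ?_⟩
    have := h hy
    simpa [Metric.mem_ball, Real.dist_eq, abs_sub_comm] using this

lemma restrict_isQuasiMetric (hd : IsQuasiMetric d) (A : Set X) :
    IsQuasiMetric (fun a b : A => d a b) :=
  ⟨fun a b => hd.nonneg a b, fun a => hd.refl a,
   fun a b h1 h2 => Subtype.ext (hd.eq_of_both_zero a b h1 h2),
   fun a b c => hd.triangle a b c⟩

lemma forwardTopology_subtype (hd : IsQuasiMetric d) (A : Set X) :
    forwardTopology (fun a b : A => d a b) =
      TopologicalSpace.induced (Subtype.val : A → X) (forwardTopology d) := by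
  apply le_antisymm
  · -- every induced-open set is open in the subspace forward topology
    intro U hU
    rw [isOpen_forward_iff (fun a b : A => d a b) (restrict_isQuasiMetric d hd A)]
    intro a ha
    obtain ⟨V, hV, rfl⟩ := hU
    obtain ⟨ε, hε, h⟩ := (isOpen_forward_iff d hd V).1 hV (a : X) ha
    exact ⟨ε, hε, fun b hb => h hb⟩
  · -- generators of the subspace forward topology are induced-open
    apply le_generateFrom
    rintro S ⟨a, ε, hε, rfl⟩
    exact ⟨{y | d (a : X) y < ε},
      TopologicalSpace.GenerateOpen.basic _ ⟨(a : X), ε, hε, rfl⟩, rfl⟩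

end Aux

/-- a closed subset of a T₁, normal, UC quasi-metric space is itself UC
with the restricted quasi-metric. -/
theorem closed_subset_isUC {X : Type*} (d : X → X → ℝ) (hd : IsQuasiMetric d)
    (hT1 : @T1Space X (forwardTopology d))
    (hN : @NormalSpace X (forwardTopology d))
    (hUC : IsUC d)
    (A : Set X) (hAc : @IsClosed X (forwardTopology d) A) :
    IsUC (fun a b : A => d a b) := by
  intro f hf
  letI : TopologicalSpace X := forwardTopology d
  -- f is continuous in the subspace topology
  have hfc : Continuous f := by
    have := (forwardContinuous_iff_continuous (fun a b : A => d a b)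
      (restrict_isQuasiMetric d hd A) f).1 hf
    rwa [forwardTopology_subtype d hd A] at this
  -- Tietze extension
  obtain ⟨g, hg⟩ := ContinuousMap.exists_restrict_eq (Y := ℝ) hAc ⟨f, hfc⟩
  have hgf : ∀ a : A, g a = f a := fun a =>
    congrFun (congrArg ContinuousMap.toFun hg) a
  have hgFC : ForwardContinuous d g :=
    (forwardContinuous_iff_continuous d hd g).2 g.continuous
  have hgUC : UniformlyCont d g := hUC g hgFC
  intro ε hε
  obtain ⟨δ, hδ, h⟩ := hgUC ε hε
  refine ⟨δ, hδ, fun a b hab => ?_⟩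
  have := h a b hab
  rwa [hgf a, hgf b] at this
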